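/- Let k vertices c_0,…,c_{k−1} form a clique in a graph G and be ordered by a contraction order π as π(c_0) < … < π(c_{k−1}). Then in any contraction hierarchy of G w.r.t. π, for every i the search space of c_i contains all c_j with j ≥ i; in particular |SS(c_i)| ≥ k − i. -/

import Mathlib

/-- If `c_0, …, c_{k-1}` form a clique in `G` and are ordered
increasingly by the contraction order `π`, then in any contraction hierarchy
graph `Gplus ≥ G` the search space of `c_i` (vertices reachable from `c_i` via
strictly `π`-increasing paths) contains all `c_j` with `j ≥ i`; in particular
`|SS(c_i)| ≥ k - i`. -/
theorem clique_in_searchSpace {V : Type*} [Fintype V] [DecidableEq V]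
    (G Gplus : SimpleGraph V) (hle : G ≤ Gplus)
    (π : V → ℕ) (hπ : Function.Injective π)
    (k : ℕ) (c : Fin k → V) (hc : Function.Injective c)
    (hclique : ∀ i j : Fin k, i ≠ j → G.Adj (c i) (c j))
    (hmono : ∀ i j : Fin k, i < j → π (c i) < π (c j))
    (SS : V → Set V)
    (hSS : ∀ v : V, SS v = {u : V | ∃ p : Gplus.Walk v u,
      List.Chain' (fun a b => π a < π b) p.support}) :
    ∀ i : Fin k, (∀ j : Fin k, i ≤ j → c j ∈ SS (c i)) ∧
      k - (i : ℕ) ≤ (SS (c i)).ncard := by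
  intro i
  have hmem : ∀ j : Fin k, i ≤ j → c j ∈ SS (c i) := by
    intro j hij
    rw [hSS]
    rcases eq_or_lt_of_le hij with h | h
    · subst h
      exact ⟨SimpleGraph.Walk.nil, by simp [List.Chain']⟩
    · have hadj : Gplus.Adj (c i) (c j) := hle (hclique i j (ne_of_lt h))
      exact ⟨hadj.toWalk, by simp [List.Chain', hmono i j h]⟩
  refine ⟨hmem, ?_⟩
  have hsub : c '' (Set.Ici i) ⊆ SS (c i) := by
    rintro _ ⟨j, hj, rfl⟩; exact hmem j hj
  have h1 : (c '' (Set.Ici i)).ncard = (Set.Ici i).ncard :=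
    Set.ncard_image_of_injective _ hc
  have h2 : (Set.Ici i).ncard = k - (i : ℕ) := by
    simp [Set.ncard_eq_toFinset_card', Set.toFinset_Ici, Fin.card_Ici]
  calc k - (i : ℕ) = (c '' (Set.Ici i)).ncard := by rw [h1, h2]
    _ ≤ (SS (c i)).ncard := Set.ncard_le_ncard hsub (Set.toFinite _)
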